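/- Let (q_k, k ≥ 0) be a probability distribution on the nonnegative integers with finite mean m = Σ_{k≥0} k·q_k. For 1 ≤ k ≤ n define the truncated step probabilities proportional to q on {0,...,n}, i.e. p_{n,n-j} = q_j/(1 - Σ_{i>n} q_i) for 0 ≤ j ≤ n. Then n·(1 - Σ_{k=0}^n p_{n,k} (k/n)^λ) → λ·m as n → ∞, for every λ > 0. -/

import Mathlib

open Filter


lemma aux_lim (lam : ℝ) (hlam : 0 < lam) (j : ℕ) :
    Tendsto (fun n : ℕ => (n:ℝ) * (1 - (1 - (j:ℝ)/n) ^ lam)) atTop (nhds (lam * j)) := by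
  rcases Nat.eq_zero_or_pos j with rfl | hj
  · simpa using (tendsto_const_nhds : Tendsto (fun _ : ℕ => (0:ℝ)) atTop (nhds 0))
  · have hd : HasDerivAt (fun t : ℝ => (1 - t) ^ lam) (-lam) 0 := by
      have h1 : HasDerivAt (fun t : ℝ => 1 - t) (-1) (0:ℝ) := (hasDerivAt_id (0:ℝ)).const_sub 1
      have h2 : HasDerivAt (fun x : ℝ => x ^ lam) (lam * (1:ℝ) ^ (lam - 1)) (1:ℝ) :=
        Real.hasDerivAt_rpow_const (Or.inl one_ne_zero)
      have h2' : HasDerivAt (fun x : ℝ => x ^ lam) (lam * (1:ℝ) ^ (lam - 1))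
          ((fun t : ℝ => 1 - t) 0) := by simpa using h2
      have := h2'.comp (0:ℝ) h1
      rw [show lam * (1:ℝ) ^ (lam - 1) * -1 = -lam by rw [Real.one_rpow]; ring] at this
      exact this
    have hslope : Tendsto (fun t : ℝ => ((1 - t) ^ lam - 1) / t) (nhdsWithin 0 {(0:ℝ)}ᶜ)
        (nhds (-lam)) := by
      have := (hasDerivAt_iff_tendsto_slope).1 hd
      refine this.congr fun t => ?_
      simp [slope_def_field, div_eq_inv_mul]
    have hkey : Tendsto (fun t : ℝ => (1 - (1 - t) ^ lam) / t) (nhdsWithin 0 {(0:ℝ)}ᶜ)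
        (nhds lam) := by
      have := hslope.neg
      rw [neg_neg] at this
      refine this.congr fun t => ?_
      rw [← neg_div, neg_sub]
    -- t n = j / n tends to 0 within ≠ 0
    have ht0 : Tendsto (fun n : ℕ => (j:ℝ) / n) atTop (nhds 0) :=
      tendsto_const_div_atTop_nhds_zero_nat _
    have ht : Tendsto (fun n : ℕ => (j:ℝ) / n) atTop (nhdsWithin 0 {(0:ℝ)}ᶜ) := by
      refine tendsto_nhdsWithin_of_tendsto_nhds_of_eventually_within _ ht0 ?_
      filter_upwards [eventually_ge_atTop 1] with n hn
      have hn0 : (0:ℝ) < n := by exact_mod_cast hn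
      have : (0:ℝ) < (j:ℝ) / n := div_pos (by exact_mod_cast hj) hn0
      exact Set.mem_compl_singleton_iff.2 (ne_of_gt this)
    have hcomp : Tendsto (fun n : ℕ => (1 - (1 - (j:ℝ)/n) ^ lam) / ((j:ℝ)/n)) atTop
        (nhds lam) := hkey.comp ht
    have := hcomp.const_mul (j:ℝ)
    rw [mul_comm] at this
    refine this.congr' ?_
    filter_upwards [eventually_ge_atTop 1] with n hn
    have hn0 : (0:ℝ) < n := by exact_mod_cast hn
    have hj0 : (0:ℝ) < (j:ℝ) := by exact_mod_cast hj
    field_simp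

lemma aux_bound (lam : ℝ) (hlam : 0 < lam) {n j : ℕ} (hjn : j ≤ n) :
    0 ≤ (n:ℝ) * (1 - (1 - (j:ℝ)/n) ^ lam) ∧
      (n:ℝ) * (1 - (1 - (j:ℝ)/n) ^ lam) ≤ max 1 lam * j := by
  rcases Nat.eq_zero_or_pos n with rfl | hn
  · interval_cases j
    simp
  have hn0 : (0:ℝ) < n := by exact_mod_cast hn
  set x : ℝ := (j:ℝ)/n with hx
  have hx0 : 0 ≤ x := div_nonneg (Nat.cast_nonneg j) hn0.le
  have hx1 : x ≤ 1 := by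
    rw [hx, div_le_one hn0]; exact_mod_cast hjn
  have hax : 0 ≤ 1 - x := by linarith
  have hbx : 1 - x ≤ 1 := by linarith
  have hle1 : (1 - x) ^ lam ≤ 1 := Real.rpow_le_one hax hbx hlam.le
  have hnx : (n:ℝ) * x = j := by rw [hx]; field_simp
  constructor
  · exact mul_nonneg hn0.le (by linarith)
  · rcases le_total lam 1 with h1 | h1
    · have hxx : 1 - (1 - x) ^ lam ≤ x := by
        rcases eq_or_lt_of_le hx1 with h | h
        · rw [h]
          have : ((1:ℝ) - 1) ^ lam = 0 := by
            simp [Real.zero_rpow (ne_of_gt hlam)]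
          rw [this]; linarith
        · have h0 : (0:ℝ) < 1 - x := by linarith
          have := Real.rpow_le_rpow_of_exponent_ge h0 hbx h1
          rw [Real.rpow_one] at this
          linarith
      have : (n:ℝ) * (1 - (1 - x) ^ lam) ≤ (n:ℝ) * x :=
        mul_le_mul_of_nonneg_left hxx hn0.le
      rw [hnx] at this
      calc (n:ℝ) * (1 - (1 - x) ^ lam) ≤ (j:ℝ) := this
        _ = 1 * (j:ℝ) := (one_mul _).symm
        _ ≤ max 1 lam * j := by
          exact mul_le_mul_of_nonneg_right (le_max_left _ _) (Nat.cast_nonneg j)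
    · have hber : 1 + lam * (-x) ≤ (1 + (-x)) ^ lam :=
        one_add_mul_self_le_rpow_one_add (by linarith) h1
      have hxx : 1 - (1 - x) ^ lam ≤ lam * x := by
        have : (1 : ℝ) - x = 1 + (-x) := by ring
        rw [this]; linarith
      have : (n:ℝ) * (1 - (1 - x) ^ lam) ≤ (n:ℝ) * (lam * x) :=
        mul_le_mul_of_nonneg_left hxx hn0.le
      calc (n:ℝ) * (1 - (1 - x) ^ lam) ≤ (n:ℝ) * (lam * x) := this
        _ = lam * ((n:ℝ) * x) := by ring
        _ = lam * j := by rw [hnx]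
        _ ≤ max 1 lam * j := mul_le_mul_of_nonneg_right (le_max_right _ _) (Nat.cast_nonneg j)

theorem stmt13 (q : ℕ → ℝ) (hq : ∀ k, 0 ≤ q k) (hq0 : q 0 < 1)
    (hsum : ∑' k, q k = 1)
    (m : ℝ) (hm : HasSum (fun k : ℕ => (k : ℝ) * q k) m)
    (lam : ℝ) (hlam : 0 < lam) :
    Tendsto (fun n : ℕ => (n : ℝ) *
        (1 - ∑ k ∈ Finset.range (n+1),
          q (n - k) / (∑ i ∈ Finset.range (n+1), q i) * ((k : ℝ) / n) ^ lam))
      atTop (nhds (lam * m)) := by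
  classical
  set F : ℕ → ℕ → ℝ := fun n j =>
    if j ≤ n then q j * ((n:ℝ) * (1 - (1 - (j:ℝ)/n) ^ lam)) else 0 with hF
  -- summability of q
  have hsummul : Summable (fun k : ℕ => (k:ℝ) * q k) := hm.summable
  have hq1 : Summable (fun k : ℕ => q (k+1)) := by
    refine Summable.of_nonneg_of_le (fun k => hq _) (fun k => ?_)
      ((summable_nat_add_iff 1).2 hsummul)
    have h1 : (1:ℝ) ≤ ((k+1:ℕ) : ℝ) := by exact_mod_cast Nat.succ_le_succ (Nat.zero_le k)
    nlinarith [hq (k+1)]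
  have hqsum : Summable q := (summable_nat_add_iff 1).1 hq1
  have hqH : HasSum q 1 := hsum ▸ hqsum.hasSum
  have hS : Tendsto (fun n : ℕ => ∑ i ∈ Finset.range (n+1), q i) atTop (nhds 1) :=
    hqH.tendsto_sum_nat.comp (tendsto_add_atTop_nat 1)
  -- dominated convergence
  have hbsum : Summable (fun j : ℕ => max 1 lam * ((j:ℝ) * q j)) := hsummul.mul_left _
  have hlim : ∀ j : ℕ, Tendsto (fun n : ℕ => F n j) atTop (nhds (q j * (lam * j))) := by
    intro j
    have := (aux_lim lam hlam j).const_mul (q j)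
    refine this.congr' ?_
    filter_upwards [eventually_ge_atTop j] with n hn
    simp [hF, hn]
  have hbound : ∀ n j, ‖F n j‖ ≤ max 1 lam * ((j:ℝ) * q j) := by
    intro n j
    by_cases h : j ≤ n
    · obtain ⟨h0, h1⟩ := aux_bound lam hlam (n := n) (j := j) h
      have hFn : F n j = q j * ((n:ℝ) * (1 - (1 - (j:ℝ)/n) ^ lam)) := by simp [hF, h]
      rw [hFn, Real.norm_eq_abs, abs_of_nonneg (mul_nonneg (hq j) h0)]
      calc q j * ((n:ℝ) * (1 - (1 - (j:ℝ)/n) ^ lam)) ≤ q j * (max 1 lam * j) :=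
            mul_le_mul_of_nonneg_left h1 (hq j)
        _ = max 1 lam * ((j:ℝ) * q j) := by ring
    · have hFn : F n j = 0 := by simp [hF, h]
      rw [hFn, norm_zero]
      exact mul_nonneg (le_max_of_le_left zero_le_one)
        (mul_nonneg (Nat.cast_nonneg j) (hq j))
  have hg : HasSum (fun j : ℕ => q j * (lam * (j:ℝ))) (lam * m) := by
    have h := hm.mul_left lam
    have heq : (fun j : ℕ => q j * (lam * (j:ℝ))) = fun k : ℕ => lam * ((k:ℝ) * q k) := by
      funext k; ring
    rw [heq]; exact h
  have hT : Tendsto (fun n : ℕ => ∑' j, F n j) atTop (nhds (lam * m)) := by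
    have := tendsto_tsum_of_dominated_convergence hbsum hlim
      (Eventually.of_forall hbound)
    rwa [hg.tsum_eq] at this
  have hfin : Tendsto (fun n : ℕ =>
      (∑ i ∈ Finset.range (n+1), q i)⁻¹ * ∑' j, F n j) atTop (nhds (lam * m)) := by
    have := (hS.inv₀ one_ne_zero).mul hT
    simpa using this
  refine Tendsto.congr' ?_ hfin
  filter_upwards [hS.eventually_ne one_ne_zero, eventually_ge_atTop 1] with n hSn hn1
  have hn0 : (0:ℝ) < n := by exact_mod_cast hn1
  set S : ℝ := ∑ i ∈ Finset.range (n+1), q i with hSdef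
  -- tsum to finite sum
  have hA : ∑' j, F n j = ∑ j ∈ Finset.range (n+1),
      q j * ((n:ℝ) * (1 - (1 - (j:ℝ)/n) ^ lam)) := by
    refine (tsum_eq_sum ?_).trans (Finset.sum_congr rfl fun j hj => ?_)
    · intro b hb
      have hb' : ¬ b ≤ n := fun h => hb (Finset.mem_range.2 (Nat.lt_succ_of_le h))
      simp [hF, hb']
    · have hj' : j ≤ n := Nat.lt_succ_iff.1 (Finset.mem_range.1 hj)
      simp [hF, hj']
  -- reflect the sum in the target
  have hrefl : ∑ k ∈ Finset.range (n+1), q (n-k) / S * ((k:ℝ)/n) ^ lam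
      = ∑ j ∈ Finset.range (n+1), q j / S * (1 - (j:ℝ)/n) ^ lam := by
    rw [← Finset.sum_range_reflect]
    refine Finset.sum_congr rfl fun j hj => ?_
    have hj' : j ≤ n := Nat.lt_succ_iff.1 (Finset.mem_range.1 hj)
    have h1 : n + 1 - 1 - j = n - j := by omega
    have h2 : n - (n - j) = j := Nat.sub_sub_self hj'
    have h3 : ((n - j : ℕ) : ℝ) = (n:ℝ) - j := Nat.cast_sub hj'
    have h4 : ((n:ℝ) - j)/n = 1 - (j:ℝ)/n := by field_simp
    rw [h1, h2, h3, h4]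
  rw [hA, hrefl]
  have hT2 : ∑ j ∈ Finset.range (n+1), q j / S * (1 - (j:ℝ)/n) ^ lam
      = S⁻¹ * ∑ j ∈ Finset.range (n+1), q j * (1 - (j:ℝ)/n) ^ lam := by
    rw [Finset.mul_sum]
    exact Finset.sum_congr rfl fun j _ => by rw [div_eq_mul_inv]; ring
  have hexp : ∑ j ∈ Finset.range (n+1), q j * ((n:ℝ) * (1 - (1 - (j:ℝ)/n) ^ lam))
      = (n:ℝ) * S - (n:ℝ) * ∑ j ∈ Finset.range (n+1), q j * (1 - (j:ℝ)/n) ^ lam := by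
    rw [hSdef, Finset.mul_sum, Finset.mul_sum, ← Finset.sum_sub_distrib]
    exact Finset.sum_congr rfl fun j _ => by ring
  rw [hT2, hexp]
  field_simp
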